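/- Consider the ODE system i' = −(1+r₊y)i + r₋(ip + ii), ip' = r₊(y − i/2)i − (1+r₋)ip + ii, ii' = r₊i²/2 + λ·ip − (2+r₋+λ)ii on the invariant set Λ = {(y,i,ip,ii) : 0 ≤ i ≤ y ≤ 1, 0 ≤ ii ≤ ip ≤ (1−y)/2}, with y(t) a common solution of y' = −r₊y² + r₋(1−y). If u(t) = (i,ip,ii)(t) and v(t) are two solutions driven by the same y(t) with u(0) ≤ v(0) coordinatewise, then u(t) ≤ v(t) coordinatewise for all t ≥ 0. -/

import Mathlib

open Set Filter Topology

/-- Key slope estimate for the negative part of a differentiable function. -/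
lemma negPart_slope_lt {w : ℝ → ℝ} {w' x M r : ℝ}
    (hw : HasDerivWithinAt w w' (Set.Ici 0) x) (hx : 0 ≤ x)
    (hM : 0 ≤ M) (hb : w x ≤ 0 → -w' ≤ M) (hr : M < r) :
    ∀ᶠ z in 𝓝[>] x, (z - x)⁻¹ * (max 0 (-(w z)) - max 0 (-(w x))) < r := by
  have hrpos : 0 < r := lt_of_le_of_lt hM hr
  have hsub : 𝓝[>] x ≤ 𝓝[Set.Ici 0 \ {x}] x := by
    apply nhdsWithin_mono
    intro z hz
    exact ⟨le_trans hx (le_of_lt hz), ne_of_gt hz⟩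
  have hmem : ∀ᶠ z in 𝓝[>] x, x < z := eventually_mem_nhdsWithin
  by_cases hwx : 0 < w x
  · have hc : ContinuousWithinAt w (Set.Ici 0) x := hw.continuousWithinAt
    have h1 : ∀ᶠ z in 𝓝[Set.Ici 0] x, 0 < w z := hc.eventually_const_lt hwx
    have h2 : ∀ᶠ z in 𝓝[>] x, 0 < w z := by
      apply Filter.Eventually.filter_mono _ h1
      apply nhdsWithin_mono
      intro z hz
      exact le_trans hx (le_of_lt hz)
    filter_upwards [h2] with z hz
    rw [max_eq_left (by linarith : -(w z) ≤ 0), max_eq_left (by linarith : -(w x) ≤ 0)]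
    simpa using hrpos
  · push_neg at hwx
    have hM' : -w' ≤ M := hb hwx
    have hslope : Tendsto (slope w x) (𝓝[>] x) (𝓝 w') :=
      (hasDerivWithinAt_iff_tendsto_slope.mp hw).mono_left hsub
    have h1 : ∀ᶠ z in 𝓝[>] x, w' - (r - M) < slope w x z :=
      hslope.eventually_const_lt (by linarith)
    filter_upwards [h1, hmem] with z hz hxz
    have hzx : 0 < z - x := by linarith
    have hnx : max 0 (-(w x)) = -(w x) := max_eq_right (by linarith)
    have hkey : max 0 (-(w z)) - max 0 (-(w x)) ≤ max 0 (w x - w z) := by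
      rw [hnx]
      rcases le_total 0 (-(w z)) with h | h
      · rw [max_eq_right h]
        have : -(w z) - -(w x) = w x - w z := by ring
        rw [this]
        exact le_max_right _ _
      · rw [max_eq_left h]
        have : (0:ℝ) - -(w x) = w x := by ring
        rw [this]
        exact le_trans hwx (le_max_left _ _)
    have hs : slope w x z = (w z - w x) / (z - x) := slope_def_field w x z
    have h2 : max 0 (w x - w z) < r * (z - x) := by
      rcases le_total (w x - w z) 0 with h | h
      · rw [max_eq_left h]; positivity
      · rw [max_eq_right h]
        have : (w z - w x) / (z - x) > w' - (r - M) := by rw [← hs]; exact hz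
        have h3 : w z - w x > (w' - (r - M)) * (z - x) := by
          calc w z - w x = ((w z - w x) / (z - x)) * (z - x) := by field_simp
          _ > (w' - (r - M)) * (z - x) := by
              exact mul_lt_mul_of_pos_right this hzx
        nlinarith
    calc (z - x)⁻¹ * (max 0 (-(w z)) - max 0 (-(w x)))
        ≤ (z - x)⁻¹ * max 0 (w x - w z) := by
          apply mul_le_mul_of_nonneg_left hkey (le_of_lt (inv_pos.mpr hzx))
      _ < r := by
          rw [inv_mul_lt_iff₀ hzx, mul_comm] at *
          linarith [h2]

/-- Abstract cooperativity lemma for a 3-dimensional system. -/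
lemma cooperative3 {w1 w2 w3 d1 d2 d3 : ℝ → ℝ} {K : ℝ} (hK : 0 ≤ K)
    (hw1 : ∀ x ∈ Set.Ici (0:ℝ), HasDerivWithinAt w1 (d1 x) (Set.Ici 0) x)
    (hw2 : ∀ x ∈ Set.Ici (0:ℝ), HasDerivWithinAt w2 (d2 x) (Set.Ici 0) x)
    (hw3 : ∀ x ∈ Set.Ici (0:ℝ), HasDerivWithinAt w3 (d3 x) (Set.Ici 0) x)
    (hb1 : ∀ x ∈ Set.Ici (0:ℝ), w1 x ≤ 0 →
      -(d1 x) ≤ K * (max 0 (-(w1 x)) + max 0 (-(w2 x)) + max 0 (-(w3 x))))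
    (hb2 : ∀ x ∈ Set.Ici (0:ℝ), w2 x ≤ 0 →
      -(d2 x) ≤ K * (max 0 (-(w1 x)) + max 0 (-(w2 x)) + max 0 (-(w3 x))))
    (hb3 : ∀ x ∈ Set.Ici (0:ℝ), w3 x ≤ 0 →
      -(d3 x) ≤ K * (max 0 (-(w1 x)) + max 0 (-(w2 x)) + max 0 (-(w3 x))))
    (h01 : 0 ≤ w1 0) (h02 : 0 ≤ w2 0) (h03 : 0 ≤ w3 0) :
    ∀ t ∈ Set.Ici (0:ℝ), 0 ≤ w1 t ∧ 0 ≤ w2 t ∧ 0 ≤ w3 t := by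
  intro t ht
  obtain ⟨f, hfs⟩ : ∃ f : ℝ → ℝ, ∀ s,
      f s = max 0 (-(w1 s)) + max 0 (-(w2 s)) + max 0 (-(w3 s)) := ⟨_, fun _ => rfl⟩
  have hfnn : ∀ s, 0 ≤ f s := by
    intro s
    have a1 := le_max_left 0 (-(w1 s))
    have a2 := le_max_left 0 (-(w2 s))
    have a3 := le_max_left 0 (-(w3 s))
    rw [hfs]; linarith
  have hcont : ContinuousOn f (Set.Icc 0 t) := by
    have hc : ∀ (w : ℝ → ℝ) (d : ℝ → ℝ),
        (∀ x ∈ Set.Ici (0:ℝ), HasDerivWithinAt w (d x) (Set.Ici 0) x) →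
        ContinuousOn (fun s => max 0 (-(w s))) (Set.Icc 0 t) := by
      intro w d hw
      have hcw : ContinuousOn w (Set.Ici 0) := fun x hx => (hw x hx).continuousWithinAt
      intro x hx
      exact continuousWithinAt_const.max
        ((hcw x (Set.Icc_subset_Ici_self hx)).mono Set.Icc_subset_Ici_self).neg
    have : ContinuousOn (fun s => max 0 (-(w1 s)) + max 0 (-(w2 s)) + max 0 (-(w3 s)))
        (Set.Icc 0 t) := ((hc w1 d1 hw1).add (hc w2 d2 hw2)).add (hc w3 d3 hw3)
    have hfe : f = fun s => max 0 (-(w1 s)) + max 0 (-(w2 s)) + max 0 (-(w3 s)) :=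
      funext hfs
    rw [hfe]
    exact this
  have key : ∀ x ∈ Set.Icc (0:ℝ) t, f x ≤ gronwallBound 0 (3*K) 0 (x - 0) := by
    apply le_gronwallBound_of_liminf_deriv_right_le (f' := fun x => 3 * K * f x) hcont
    · intro x hx r hr
      have hx0 : 0 ≤ x := hx.1
      have hεpos : 0 < (r - 3 * K * f x) / 3 := by linarith
      have hKf : (0:ℝ) ≤ K * f x := mul_nonneg hK (hfnn x)
      have e1 := negPart_slope_lt (hw1 x hx0) hx0 hKf
        (fun h => by rw [hfs x]; exact hb1 x hx0 h) (by linarith :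
          K * f x < K * f x + (r - 3 * K * f x) / 3)
      have e2 := negPart_slope_lt (hw2 x hx0) hx0 hKf
        (fun h => by rw [hfs x]; exact hb2 x hx0 h) (by linarith :
          K * f x < K * f x + (r - 3 * K * f x) / 3)
      have e3 := negPart_slope_lt (hw3 x hx0) hx0 hKf
        (fun h => by rw [hfs x]; exact hb3 x hx0 h) (by linarith :
          K * f x < K * f x + (r - 3 * K * f x) / 3)
      apply Filter.Eventually.frequently
      filter_upwards [e1, e2, e3] with z h1 h2 h3
      have hdec : (z - x)⁻¹ * (f z - f x) =
          (z - x)⁻¹ * (max 0 (-(w1 z)) - max 0 (-(w1 x)))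
          + (z - x)⁻¹ * (max 0 (-(w2 z)) - max 0 (-(w2 x)))
          + (z - x)⁻¹ * (max 0 (-(w3 z)) - max 0 (-(w3 x))) := by
        rw [hfs z, hfs x]; ring
      rw [hdec]
      have h4 : 3 * (K * f x + (r - 3 * K * f x) / 3) = r := by ring
      linarith
    · show f 0 ≤ 0
      rw [hfs 0]
      rw [max_eq_left (by linarith : -(w1 0) ≤ 0), max_eq_left (by linarith : -(w2 0) ≤ 0),
        max_eq_left (by linarith : -(w3 0) ≤ 0)]
      norm_num
    · intro x hx
      simp
  have hft : f t ≤ 0 := by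
    have := key t ⟨ht, le_refl t⟩
    rwa [gronwallBound_ε0_δ0] at this
  rw [hfs t] at hft
  have h1 : max 0 (-(w1 t)) = 0 ∧ max 0 (-(w2 t)) = 0 ∧ max 0 (-(w3 t)) = 0 := by
    have a1 := le_max_left 0 (-(w1 t))
    have a2 := le_max_left 0 (-(w2 t))
    have a3 := le_max_left 0 (-(w3 t))
    refine ⟨le_antisymm (by linarith) a1, le_antisymm (by linarith) a2,
      le_antisymm (by linarith) a3⟩
  refine ⟨?_, ?_, ?_⟩
  · have := le_max_right 0 (-(w1 t)); rw [h1.1] at this; linarith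
  · have := le_max_right 0 (-(w2 t)); rw [h1.2.1] at this; linarith
  · have := le_max_right 0 (-(w3 t)); rw [h1.2.2] at this; linarith
theorem stmt16 (rp rm lam : ℝ) (hrp : 0 < rp) (hrm : 0 < rm) (hlam : 0 < lam)
    (y i₁ ip₁ ii₁ i₂ ip₂ ii₂ : ℝ → ℝ)
    (hy : ∀ t ∈ Set.Ici (0 : ℝ),
      HasDerivWithinAt y (-rp * y t ^ 2 + rm * (1 - y t)) (Set.Ici 0) t)
    (hi₁ : ∀ t ∈ Set.Ici (0 : ℝ),
      HasDerivWithinAt i₁ (-(1 + rp * y t) * i₁ t + rm * (ip₁ t + ii₁ t)) (Set.Ici 0) t)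
    (hip₁ : ∀ t ∈ Set.Ici (0 : ℝ),
      HasDerivWithinAt ip₁ (rp * (y t - i₁ t / 2) * i₁ t - (1 + rm) * ip₁ t + ii₁ t)
        (Set.Ici 0) t)
    (hii₁ : ∀ t ∈ Set.Ici (0 : ℝ),
      HasDerivWithinAt ii₁ (rp * i₁ t ^ 2 / 2 + lam * ip₁ t - (2 + rm + lam) * ii₁ t)
        (Set.Ici 0) t)
    (hi₂ : ∀ t ∈ Set.Ici (0 : ℝ),
      HasDerivWithinAt i₂ (-(1 + rp * y t) * i₂ t + rm * (ip₂ t + ii₂ t)) (Set.Ici 0) t)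
    (hip₂ : ∀ t ∈ Set.Ici (0 : ℝ),
      HasDerivWithinAt ip₂ (rp * (y t - i₂ t / 2) * i₂ t - (1 + rm) * ip₂ t + ii₂ t)
        (Set.Ici 0) t)
    (hii₂ : ∀ t ∈ Set.Ici (0 : ℝ),
      HasDerivWithinAt ii₂ (rp * i₂ t ^ 2 / 2 + lam * ip₂ t - (2 + rm + lam) * ii₂ t)
        (Set.Ici 0) t)
    (hΛ₁ : ∀ t ∈ Set.Ici (0 : ℝ), 0 ≤ i₁ t ∧ i₁ t ≤ y t ∧ y t ≤ 1 ∧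
      0 ≤ ii₁ t ∧ ii₁ t ≤ ip₁ t ∧ ip₁ t ≤ (1 - y t) / 2)
    (hΛ₂ : ∀ t ∈ Set.Ici (0 : ℝ), 0 ≤ i₂ t ∧ i₂ t ≤ y t ∧ y t ≤ 1 ∧
      0 ≤ ii₂ t ∧ ii₂ t ≤ ip₂ t ∧ ip₂ t ≤ (1 - y t) / 2)
    (h0 : i₁ 0 ≤ i₂ 0 ∧ ip₁ 0 ≤ ip₂ 0 ∧ ii₁ 0 ≤ ii₂ 0) :
    ∀ t ∈ Set.Ici (0 : ℝ), i₁ t ≤ i₂ t ∧ ip₁ t ≤ ip₂ t ∧ ii₁ t ≤ ii₂ t := by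
  have hK : (0:ℝ) ≤ 2 * rp + rm + lam + 1 := by positivity
  have main := cooperative3 (w1 := fun s => i₂ s - i₁ s) (w2 := fun s => ip₂ s - ip₁ s)
    (w3 := fun s => ii₂ s - ii₁ s)
    (d1 := fun s => (-(1 + rp * y s) * i₂ s + rm * (ip₂ s + ii₂ s)) -
      (-(1 + rp * y s) * i₁ s + rm * (ip₁ s + ii₁ s)))
    (d2 := fun s => (rp * (y s - i₂ s / 2) * i₂ s - (1 + rm) * ip₂ s + ii₂ s) -
      (rp * (y s - i₁ s / 2) * i₁ s - (1 + rm) * ip₁ s + ii₁ s))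
    (d3 := fun s => (rp * i₂ s ^ 2 / 2 + lam * ip₂ s - (2 + rm + lam) * ii₂ s) -
      (rp * i₁ s ^ 2 / 2 + lam * ip₁ s - (2 + rm + lam) * ii₁ s))
    hK
    (fun x hx => (hi₂ x hx).sub (hi₁ x hx))
    (fun x hx => (hip₂ x hx).sub (hip₁ x hx))
    (fun x hx => (hii₂ x hx).sub (hii₁ x hx))
    ?hb1 ?hb2 ?hb3 (by linarith [h0.1]) (by linarith [h0.2.1])
      (by linarith [h0.2.2])
  · intro t ht
    obtain ⟨c1, c2, c3⟩ := main t ht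
    exact ⟨by linarith, by linarith, by linarith⟩
  case hb1 =>
    intro x hx h
    obtain ⟨hA1, hA2, hA3, hA4, hA5, hA6⟩ := hΛ₁ x hx
    obtain ⟨hB1, hB2, hB3, hB4, hB5, hB6⟩ := hΛ₂ x hx
    have hy0 : 0 ≤ y x := le_trans hA1 hA2
    have N1nn := le_max_left 0 (-(i₂ x - i₁ x))
    have N2nn := le_max_left 0 (-(ip₂ x - ip₁ x))
    have N3nn := le_max_left 0 (-(ii₂ x - ii₁ x))
    have E1 := le_max_right 0 (-(i₂ x - i₁ x))
    have E2 := le_max_right 0 (-(ip₂ x - ip₁ x))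
    have E3 := le_max_right 0 (-(ii₂ x - ii₁ x))
    set N1 := max 0 (-(i₂ x - i₁ x)) with hN1
    set N2 := max 0 (-(ip₂ x - ip₁ x)) with hN2
    set N3 := max 0 (-(ii₂ x - ii₁ x)) with hN3
    have p1 : 0 ≤ rp * N1 := mul_nonneg hrp.le N1nn
    have p2 : 0 ≤ rp * N2 := mul_nonneg hrp.le N2nn
    have p3 : 0 ≤ rp * N3 := mul_nonneg hrp.le N3nn
    have q1 : 0 ≤ rm * N1 := mul_nonneg hrm.le N1nn
    have q2 : 0 ≤ rm * N2 := mul_nonneg hrm.le N2nn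
    have q3 : 0 ≤ rm * N3 := mul_nonneg hrm.le N3nn
    have l1 : 0 ≤ lam * N1 := mul_nonneg hlam.le N1nn
    have l2 : 0 ≤ lam * N2 := mul_nonneg hlam.le N2nn
    have l3 : 0 ≤ lam * N3 := mul_nonneg hlam.le N3nn
    have key : 0 ≤ (rp * y x) * (i₁ x - i₂ x) :=
      mul_nonneg (mul_nonneg hrp.le hy0) (by linarith)
    have m2 : rm * (-(ip₂ x - ip₁ x)) ≤ rm * N2 := mul_le_mul_of_nonneg_left E2 hrm.le
    have m3 : rm * (-(ii₂ x - ii₁ x)) ≤ rm * N3 := mul_le_mul_of_nonneg_left E3 hrm.le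
    have hid : -((-(1 + rp * y x) * i₂ x + rm * (ip₂ x + ii₂ x)) -
        (-(1 + rp * y x) * i₁ x + rm * (ip₁ x + ii₁ x))) =
        (i₂ x - i₁ x) + (rp * y x) * (i₂ x - i₁ x)
        + rm * (-(ip₂ x - ip₁ x)) + rm * (-(ii₂ x - ii₁ x)) := by ring
    linarith [key, m2, m3, hid, p1, p2, p3, q1, q2, q3, l1, l2, l3, N1nn, N2nn, N3nn]
  case hb2 =>
    intro x hx h
    obtain ⟨hA1, hA2, hA3, hA4, hA5, hA6⟩ := hΛ₁ x hx
    obtain ⟨hB1, hB2, hB3, hB4, hB5, hB6⟩ := hΛ₂ x hx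
    have hy0 : 0 ≤ y x := le_trans hA1 hA2
    have N1nn := le_max_left 0 (-(i₂ x - i₁ x))
    have N2nn := le_max_left 0 (-(ip₂ x - ip₁ x))
    have N3nn := le_max_left 0 (-(ii₂ x - ii₁ x))
    have E1 := le_max_right 0 (-(i₂ x - i₁ x))
    have E2 := le_max_right 0 (-(ip₂ x - ip₁ x))
    have E3 := le_max_right 0 (-(ii₂ x - ii₁ x))
    set N1 := max 0 (-(i₂ x - i₁ x)) with hN1
    set N2 := max 0 (-(ip₂ x - ip₁ x)) with hN2
    set N3 := max 0 (-(ii₂ x - ii₁ x)) with hN3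
    have p1 : 0 ≤ rp * N1 := mul_nonneg hrp.le N1nn
    have p2 : 0 ≤ rp * N2 := mul_nonneg hrp.le N2nn
    have p3 : 0 ≤ rp * N3 := mul_nonneg hrp.le N3nn
    have q1 : 0 ≤ rm * N1 := mul_nonneg hrm.le N1nn
    have q2 : 0 ≤ rm * N2 := mul_nonneg hrm.le N2nn
    have q3 : 0 ≤ rm * N3 := mul_nonneg hrm.le N3nn
    have l1 : 0 ≤ lam * N1 := mul_nonneg hlam.le N1nn
    have l2 : 0 ≤ lam * N2 := mul_nonneg hlam.le N2nn
    have l3 : 0 ≤ lam * N3 := mul_nonneg hlam.le N3nn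
    have hc0 : 0 ≤ rp * (y x - (i₁ x + i₂ x) / 2) :=
      mul_nonneg hrp.le (by linarith)
    have hcr : rp * (y x - (i₁ x + i₂ x) / 2) ≤ rp := by
      nlinarith [mul_nonneg hrp.le (show (0:ℝ) ≤ 1 - (y x - (i₁ x + i₂ x) / 2) by linarith)]
    have s1 : rp * (y x - (i₁ x + i₂ x) / 2) * (-(i₂ x - i₁ x)) ≤
        rp * (y x - (i₁ x + i₂ x) / 2) * N1 := mul_le_mul_of_nonneg_left E1 hc0
    have s2 : rp * (y x - (i₁ x + i₂ x) / 2) * N1 ≤ rp * N1 :=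
      mul_le_mul_of_nonneg_right hcr N1nn
    have m2 : rm * (ip₂ x - ip₁ x) ≤ 0 := mul_nonpos_of_nonneg_of_nonpos hrm.le h
    have hid : -((rp * (y x - i₂ x / 2) * i₂ x - (1 + rm) * ip₂ x + ii₂ x) -
        (rp * (y x - i₁ x / 2) * i₁ x - (1 + rm) * ip₁ x + ii₁ x)) =
        rp * (y x - (i₁ x + i₂ x) / 2) * (-(i₂ x - i₁ x))
        + (ip₂ x - ip₁ x) + rm * (ip₂ x - ip₁ x) - (ii₂ x - ii₁ x) := by ring
    linarith [s1, s2, m2, hid, E3, h, p1, p2, p3, q1, q2, q3, l1, l2, l3, N1nn, N2nn, N3nn]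
  case hb3 =>
    intro x hx h
    obtain ⟨hA1, hA2, hA3, hA4, hA5, hA6⟩ := hΛ₁ x hx
    obtain ⟨hB1, hB2, hB3, hB4, hB5, hB6⟩ := hΛ₂ x hx
    have hy0 : 0 ≤ y x := le_trans hA1 hA2
    have N1nn := le_max_left 0 (-(i₂ x - i₁ x))
    have N2nn := le_max_left 0 (-(ip₂ x - ip₁ x))
    have N3nn := le_max_left 0 (-(ii₂ x - ii₁ x))
    have E1 := le_max_right 0 (-(i₂ x - i₁ x))
    have E2 := le_max_right 0 (-(ip₂ x - ip₁ x))
    have E3 := le_max_right 0 (-(ii₂ x - ii₁ x))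
    set N1 := max 0 (-(i₂ x - i₁ x)) with hN1
    set N2 := max 0 (-(ip₂ x - ip₁ x)) with hN2
    set N3 := max 0 (-(ii₂ x - ii₁ x)) with hN3
    have p1 : 0 ≤ rp * N1 := mul_nonneg hrp.le N1nn
    have p2 : 0 ≤ rp * N2 := mul_nonneg hrp.le N2nn
    have p3 : 0 ≤ rp * N3 := mul_nonneg hrp.le N3nn
    have q1 : 0 ≤ rm * N1 := mul_nonneg hrm.le N1nn
    have q2 : 0 ≤ rm * N2 := mul_nonneg hrm.le N2nn
    have q3 : 0 ≤ rm * N3 := mul_nonneg hrm.le N3nn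
    have l1 : 0 ≤ lam * N1 := mul_nonneg hlam.le N1nn
    have l2 : 0 ≤ lam * N2 := mul_nonneg hlam.le N2nn
    have l3 : 0 ≤ lam * N3 := mul_nonneg hlam.le N3nn
    have hb0 : 0 ≤ rp * ((i₁ x + i₂ x) / 2) := mul_nonneg hrp.le (by linarith)
    have hbr : rp * ((i₁ x + i₂ x) / 2) ≤ rp := by
      nlinarith [mul_nonneg hrp.le (show (0:ℝ) ≤ 1 - (i₁ x + i₂ x) / 2 by linarith)]
    have s1 : rp * ((i₁ x + i₂ x) / 2) * (-(i₂ x - i₁ x)) ≤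
        rp * ((i₁ x + i₂ x) / 2) * N1 := mul_le_mul_of_nonneg_left E1 hb0
    have s2 : rp * ((i₁ x + i₂ x) / 2) * N1 ≤ rp * N1 :=
      mul_le_mul_of_nonneg_right hbr N1nn
    have m2 : lam * (-(ip₂ x - ip₁ x)) ≤ lam * N2 := mul_le_mul_of_nonneg_left E2 hlam.le
    have m3 : rm * (ii₂ x - ii₁ x) ≤ 0 := mul_nonpos_of_nonneg_of_nonpos hrm.le h
    have m4 : lam * (ii₂ x - ii₁ x) ≤ 0 := mul_nonpos_of_nonneg_of_nonpos hlam.le h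
    have hid : -((rp * i₂ x ^ 2 / 2 + lam * ip₂ x - (2 + rm + lam) * ii₂ x) -
        (rp * i₁ x ^ 2 / 2 + lam * ip₁ x - (2 + rm + lam) * ii₁ x)) =
        rp * ((i₁ x + i₂ x) / 2) * (-(i₂ x - i₁ x)) + lam * (-(ip₂ x - ip₁ x))
        + 2 * (ii₂ x - ii₁ x) + rm * (ii₂ x - ii₁ x) + lam * (ii₂ x - ii₁ x) := by ring
    linarith [s1, s2, m2, m3, m4, hid, h, p1, p2, p3, q1, q2, q3, l1, l2, l3,
      N1nn, N2nn, N3nn]
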